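/- For all positive integers k and l, there exists a positive integer m such that every coloring c : {1,…,m} → {1,…,k} contains a monochromatic arithmetic progression of length l. Consequently, the van der Waerden number W(k,l) is well defined. -/

import Mathlib

/-- `c` (viewed as a coloring of `{1,…,m}`) contains a monochromatic arithmetic
progression of length `l`: there are positive `a`, `d` with `a + (l-1)d ≤ m`
and `c (a) = c (a+d) = … = c (a+(l-1)d)`. -/
def ContainsAP (l m : ℕ) (c : ℕ → ℕ) : Prop :=
  ∃ a d : ℕ, 0 < a ∧ 0 < d ∧ a + (l - 1) * d ≤ m ∧
    ∀ j : ℕ, j ≤ l - 1 → c (a + j * d) = c a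

/-- `c` is a coloring of `{1,…,m}` with colors in `{1,…,k}`. -/
def IsColoring (k m : ℕ) (c : ℕ → ℕ) : Prop :=
  ∀ i : ℕ, 1 ≤ i → i ≤ m → 1 ≤ c i ∧ c i ≤ k

/-- The van der Waerden number `W k l`: the least positive `m` such that every
coloring of `{1,…,m}` with `k` colors contains a monochromatic arithmetic
progression of length `l`. -/
noncomputable def vdW (k l : ℕ) : ℕ :=
  sInf {m : ℕ | 0 < m ∧ ∀ c : ℕ → ℕ, IsColoring k m c → ContainsAP l m c}

open Combinatorics Finset in
/-- Bounded van der Waerden from Hales–Jewett: there is a bound `N` such that every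
`k`-coloring of `ℕ` has a monochromatic AP of length `l` inside `[0, N]`. -/
lemma bounded_vdw (k l : ℕ) (hl : 0 < l) :
    ∃ N : ℕ, ∀ C : ℕ → Fin k, ∃ a b : ℕ, 0 < a ∧ a * (l - 1) + b ≤ N ∧
      ∀ j : ℕ, j ≤ l - 1 → C (a * j + b) = C b := by
  obtain ⟨ι, _inst, hι⟩ := Line.exists_mono_in_high_dimension (Fin l) (Fin k)
  classical
  refine ⟨Fintype.card ι * (l - 1), fun C => ?_⟩
  obtain ⟨L, c0, hL⟩ := hι fun v => C (∑ i, (v i : ℕ))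
  set s : Finset ι := Finset.univ.filter (fun i => L.idxFun i = none) with hs
  set a := s.card with ha
  set b := ∑ i ∈ sᶜ, ((L.idxFun i).map Fin.val).getD 0 with hb
  have key : ∀ x : Fin l, (∑ i, ((L x i : ℕ))) = a * x + b := by
    intro x
    rw [← Finset.sum_add_sum_compl s]
    congr 1
    · rw [Finset.sum_congr rfl (fun i hi => ?_), Finset.sum_const, smul_eq_mul]
      rw [hs, Finset.mem_filter] at hi
      show ((L.idxFun i).getD x : ℕ) = (x : ℕ)
      rw [hi.2]
      rfl
    · apply Finset.sum_congr rfl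
      intro i hi
      rw [hs, Finset.compl_filter, Finset.mem_filter] at hi
      obtain ⟨y, hy⟩ := Option.ne_none_iff_exists.mp hi.2
      show ((L.idxFun i).getD x : ℕ) = _
      rw [← hy]
      rfl
  have ha0 : 0 < a := by
    rw [ha, Finset.card_pos]
    exact ⟨L.proper.choose, by
      rw [hs, Finset.mem_filter]; exact ⟨Finset.mem_univ _, L.proper.choose_spec⟩⟩
  have hCx : ∀ x : Fin l, C (a * x + b) = c0 := fun x => by rw [← key x]; exact hL x
  refine ⟨a, b, ha0, ?_, fun j hj => ?_⟩
  · have := key ⟨l - 1, by omega⟩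
    have hle : (∑ i, ((L ⟨l - 1, by omega⟩ i : ℕ))) ≤ Fintype.card ι * (l - 1) := by
      calc (∑ i, ((L ⟨l - 1, by omega⟩ i : ℕ))) ≤ ∑ _i : ι, (l - 1) :=
            Finset.sum_le_sum fun i _ => by
              have := (L ⟨l - 1, by omega⟩ i).isLt; omega
        _ = Fintype.card ι * (l - 1) := by simp [Finset.sum_const, Finset.card_univ]
    rw [this] at hle; exact hle
  · have h1 : C (a * j + b) = c0 := by
      have := hCx ⟨j, by omega⟩; simpa using this
    have h2 : C b = c0 := by
      have := hCx ⟨0, hl⟩; simpa using this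
    rw [h1, h2]

theorem vdW_well_defined (k l : ℕ) (hk : 0 < k) (hl : 0 < l) :
    ∃ m : ℕ, 0 < m ∧ ∀ c : ℕ → ℕ, IsColoring k m c → ContainsAP l m c := by
  obtain ⟨N, hN⟩ := bounded_vdw k l hl
  refine ⟨N + 1, Nat.succ_pos N, fun c hc => ?_⟩
  rw [IsColoring] at hc
  set C : ℕ → Fin k := fun x => ⟨min (c (x + 1) - 1) (k - 1), by omega⟩ with hC
  obtain ⟨a, b, ha, hab, hmono⟩ := hN C
  have hcC : ∀ x : ℕ, x ≤ N → c (x + 1) = (C x : ℕ) + 1 := by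
    intro x hx
    have := hc (x + 1) (by omega) (by omega)
    simp only [hC]
    omega
  refine ⟨b + 1, a, Nat.succ_pos b, ha, by rw [Nat.mul_comm (l - 1) a]; omega, fun j hj => ?_⟩
  have h1 : a * j + b ≤ N := by
    have : a * j ≤ a * (l - 1) := Nat.mul_le_mul_left a hj
    omega
  have h2 : b ≤ N := by omega
  have e1 : b + 1 + j * a = (a * j + b) + 1 := by ring
  rw [e1, hcC _ h1, hcC _ h2, hmono j hj]
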